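/- For every natural number k and every real λ > 0, the (2k)-th derivative of the function x ↦ −1/(e^x + 1) at λ equals the convergent alternating series Σ_{P=1}^∞ (−1)^P · P^{2k} · e^{−λP}; that is, iteratedDeriv (2k) (fun x => −(Real.exp x + 1)⁻¹) λ = ∑'_{P : ℕ⁺} (−1)^P · (P : ℝ)^{2k} · Real.exp (−λ·P). -/

import Mathlib

open Real Filter

private lemma summA (n : ℕ) {c : ℝ} (hc : 0 < c) :
    Summable (fun P : ℕ+ => ((P : ℕ) : ℝ) ^ n * Real.exp (-(c * ((P : ℕ) : ℝ)))) := by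
  have h : Summable (fun m : ℕ => (m : ℝ) ^ n * Real.exp (-(c * m))) := by
    have hr : ‖Real.exp (-c)‖ < 1 := by
      rw [Real.norm_eq_abs, abs_of_pos (Real.exp_pos _)]
      exact Real.exp_lt_one_iff.2 (by linarith)
    have := summable_pow_mul_geometric_of_norm_lt_one (R := ℝ) n hr
    refine this.congr fun m => ?_
    rw [← Real.exp_nat_mul]
    ring_nf
  exact h.comp_injective (fun a b h => PNat.coe_injective h)

private lemma base_eq {x : ℝ} (hx : 0 < x) :
    -(Real.exp x + 1)⁻¹ = ∑' P : ℕ+, (-1 : ℝ) ^ (P : ℕ) * Real.exp (-(x * ((P : ℕ) : ℝ))) := by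
  set r : ℝ := -Real.exp (-x) with hr
  have hrn : ‖r‖ < 1 := by
    rw [hr, Real.norm_eq_abs, abs_neg, abs_of_pos (Real.exp_pos _)]
    exact Real.exp_lt_one_iff.2 (by linarith)
  have hterm : ∀ P : ℕ+, (-1 : ℝ) ^ (P : ℕ) * Real.exp (-(x * ((P : ℕ) : ℝ))) = r ^ (P : ℕ) := by
    intro P
    have h : Real.exp (-(x * ((P : ℕ) : ℝ))) = Real.exp (-x) ^ (P : ℕ) := by
      rw [← Real.exp_nat_mul]; congr 1; ring
    rw [hr, h]
    conv_rhs => rw [neg_eq_neg_one_mul, mul_pow]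
  rw [tsum_congr hterm]
  have h1 : ∑' P : ℕ+, r ^ (P : ℕ) = ∑' n : ℕ, r ^ (n + 1) := by
    rw [← Equiv.pnatEquivNat.symm.tsum_eq (fun n : ℕ+ => r ^ (n : ℕ))]
    refine tsum_congr fun n => ?_
    simp [Equiv.pnatEquivNat, Nat.succPNat]
  have h2 : ∑' n : ℕ, r ^ (n + 1) = r * (1 - r)⁻¹ := by
    simp_rw [pow_succ, mul_comm (r ^ _) r]
    rw [tsum_mul_left, tsum_geometric_of_norm_lt_one hrn]
  rw [h1, h2, hr, sub_neg_eq_add]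
  have h3 : Real.exp x + 1 ≠ 0 := by positivity
  have h4 : (1 : ℝ) + Real.exp (-x) ≠ 0 := by positivity
  have h5 : Real.exp (-x) * Real.exp x = 1 := by
    rw [← Real.exp_add]; simp
  field_simp
  nlinarith [h5]

private lemma main_eq (n : ℕ) : ∀ x : ℝ, 0 < x →
    iteratedDeriv n (fun y : ℝ => -(Real.exp y + 1)⁻¹) x =
      ∑' P : ℕ+, (-1 : ℝ) ^ (P : ℕ) * (-((P : ℕ) : ℝ)) ^ n * Real.exp (-(x * ((P : ℕ) : ℝ))) := by
  induction n with
  | zero =>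
    intro x hx
    simpa using base_eq hx
  | succ n ih =>
    intro x hx
    rw [iteratedDeriv_succ]
    set g : ℕ+ → ℝ → ℝ := fun P y =>
      (-1 : ℝ) ^ (P : ℕ) * (-((P : ℕ) : ℝ)) ^ n * Real.exp (-(y * ((P : ℕ) : ℝ))) with hg
    set g' : ℕ+ → ℝ → ℝ := fun P y =>
      (-1 : ℝ) ^ (P : ℕ) * (-((P : ℕ) : ℝ)) ^ (n + 1) * Real.exp (-(y * ((P : ℕ) : ℝ))) with hg'
    have hev : iteratedDeriv n (fun y : ℝ => -(Real.exp y + 1)⁻¹) =ᶠ[nhds x]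
        fun y => ∑' P : ℕ+, g P y := by
      filter_upwards [Ioi_mem_nhds hx] with y hy
      exact ih y hy
    rw [hev.deriv_eq]
    have hderiv : ∀ P : ℕ+, ∀ y ∈ Set.Ioi (x / 2), HasDerivAt (g P) (g' P y) y := by
      intro P y _
      have h1 : HasDerivAt (fun y : ℝ => -(y * ((P : ℕ) : ℝ))) (-((P : ℕ) : ℝ)) y := by
        simpa using ((hasDerivAt_id y).mul_const ((P : ℕ) : ℝ)).fun_neg
      have h2 := (h1.exp).const_mul ((-1 : ℝ) ^ (P : ℕ) * (-((P : ℕ) : ℝ)) ^ n)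
      refine h2.congr_deriv ?_
      rw [hg']
      ring
    have hbound : ∀ P : ℕ+, ∀ y : ℝ, y ∈ Set.Ioi (x / 2) →
        ‖g' P y‖ ≤ ((P : ℕ) : ℝ) ^ (n + 1) * Real.exp (-(x / 2 * ((P : ℕ) : ℝ))) := by
      intro P y hy
      have hnorm : ‖g' P y‖ = ((P : ℕ) : ℝ) ^ (n + 1) * Real.exp (-(y * ((P : ℕ) : ℝ))) := by
        rw [hg', Real.norm_eq_abs, abs_mul, abs_mul, abs_pow, abs_pow, abs_neg, abs_one,
          one_pow, one_mul, abs_neg, Nat.abs_cast, Real.abs_exp]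
      rw [hnorm]
      refine mul_le_mul_of_nonneg_left ?_ (by positivity)
      exact Real.exp_le_exp.2
        (neg_le_neg (mul_le_mul_of_nonneg_right (le_of_lt hy) (Nat.cast_nonneg _)))
    have hsum0 : Summable fun P : ℕ+ => g P x := by
      refine Summable.of_norm ?_
      refine (summA n hx).congr fun P => ?_
      rw [hg]
      simp [abs_mul, abs_pow, Real.abs_exp]
    have hxm : x ∈ Set.Ioi (x / 2) := Set.mem_Ioi.2 (half_lt_self hx)
    have hd := hasDerivAt_tsum_of_isPreconnected
      (summA (n + 1) (half_pos hx)) isOpen_Ioi isPreconnected_Ioi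
      hderiv hbound hxm hsum0 hxm
    exact hd.deriv

theorem iteratedDeriv_neg_inv_exp_add_one_eq_tsum
    (k : ℕ) (l : ℝ) (hl : 0 < l) :
    Summable (fun P : ℕ+ =>
        (-1 : ℝ) ^ (P : ℕ) * ((P : ℕ) : ℝ) ^ (2 * k) * Real.exp (-(l * ((P : ℕ) : ℝ))))
      ∧
    iteratedDeriv (2 * k) (fun x : ℝ => -(Real.exp x + 1)⁻¹) l =
      ∑' P : ℕ+,
        (-1 : ℝ) ^ (P : ℕ) * ((P : ℕ) : ℝ) ^ (2 * k) * Real.exp (-(l * ((P : ℕ) : ℝ))) := by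
  constructor
  · refine Summable.of_norm ?_
    refine (summA (2 * k) hl).congr fun P => ?_
    simp [abs_mul, abs_pow, Real.abs_exp]
  · rw [main_eq (2 * k) l hl]
    refine tsum_congr fun P => ?_
    rw [Even.neg_pow (even_two_mul k)]
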